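/- Let K be a field, let F ⊆ K⟨X⟩ be a set of polynomials having no constant term, and let f be an element of the two-sided ideal (F). Let Q be a labelled quiver in which distinct edges have distinct labels in X, and assume that f and all elements of F are compatible with Q. Then for every representation (𝒱, φ) of Q such that the realizations of the elements of F with respect to (𝒱, φ) are zero, the realization of f with respect to (𝒱, φ) is zero. -/

import Mathlib

open scoped BigOperators

/-- The free `R`-algebra `R⟨X⟩` on `X`, as the monoid algebra over `R`
of the free monoid `⟨X⟩` of words over `X`. -/
abbrev FreeAlg (R X : Type*) [CommRing R] := MonoidAlgebra R (FreeMonoid X)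

/-- The monomial in `R⟨X⟩` corresponding to a word `m ∈ ⟨X⟩`. -/
noncomputable def monom (R : Type*) [CommRing R] {X : Type*} (m : FreeMonoid X) : FreeAlg R X :=
  MonoidAlgebra.of R (FreeMonoid X) m

/-- `h` is obtained from `f` by a rewriting step using `g`: some monomial `m_g` in the
support of `g` divides a monomial `a·m_g·b` in the support of `f`, and
`h = f + λ·a·g·b` for some `λ ∈ R`. -/
def RewriteStep {R X : Type*} [CommRing R] (g f h : FreeAlg R X) : Prop :=
  ∃ (a b mg : FreeMonoid X) (lam : R),
    mg ∈ (g.coeff : FreeMonoid X →₀ R).support ∧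
    a * mg * b ∈ (f.coeff : FreeMonoid X →₀ R).support ∧
    h = f + lam • (monom R a * g * monom R b)

/-- `f` can be rewritten to `h` using the set `G`: there is a finite chain of rewriting
steps, each using an element of `G`, leading from `f` to `h`. -/
def RewritesTo {R X : Type*} [CommRing R] (G : Set (FreeAlg R X)) (f h : FreeAlg R X) : Prop :=
  Relation.ReflTransGen (fun p q => ∃ g ∈ G, RewriteStep g p q) f h

/-- Membership in the two-sided ideal `(F)` generated by `F`:
`f` is a finite sum `Σᵢ aᵢ·fᵢ·bᵢ` with `aᵢ, bᵢ ∈ R⟨X⟩` and `fᵢ ∈ F`. -/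
def MemIdeal {R X : Type*} [CommRing R] (F : Set (FreeAlg R X)) (f : FreeAlg R X) : Prop :=
  ∃ (n : ℕ) (a b g : Fin n → FreeAlg R X),
    (∀ i, g i ∈ F) ∧ f = ∑ i, a i * g i * b i

/-- A labelled quiver `Q = (V, E, X, s, t, l)`: a directed multigraph with vertex set `V`,
edge set `E`, source and target maps `s, t : E → V` and labelling `l : E → X`. -/
structure LabelledQuiver (V E X : Type*) where
  src : E → V
  tgt : E → V
  lab : E → X

/-- Paths in a labelled quiver `Q`; `LQPath Q u w` is the type of paths with source `u` and
target `w`.  `nil v` is the empty path at `v`; `cons e p` appends the edge `e` after `p`. -/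
inductive LQPath {V E X : Type*} (Q : LabelledQuiver V E X) : V → V → Type _ where
  | nil (v : V) : LQPath Q v v
  | cons {u : V} (e : E) (p : LQPath Q u (Q.src e)) : LQPath Q u (Q.tgt e)

namespace LQPath
variable {V E X : Type*} {Q : LabelledQuiver V E X}
/-- The label `l(p) = l(eₙ)⋯l(e₁) ∈ ⟨X⟩` of a path; the empty path has label `1`. -/
def label : {u w : V} → LQPath Q u w → FreeMonoid X
  | _, _, .nil _ => 1
  | _, _, .cons e p => FreeMonoid.of (Q.lab e) * p.label
end LQPath

namespace LabelledQuiver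

variable {V E X : Type*} (Q : LabelledQuiver V E X)

/-- The set of signatures `σ(m) = {(s(p), t(p)) : p a path in Q with l(p) = m}`. -/
def sigmaM (m : FreeMonoid X) : Set (V × V) :=
  {vw | ∃ p : LQPath Q vw.1 vw.2, p.label = m}

variable {R : Type*} [CommRing R]

/-- The set of signatures `σ(f) = ⋂_{m ∈ supp(f)} σ(m)` of a polynomial. -/
def sigmaP (f : FreeAlg R X) : Set (V × V) :=
  ⋂ m ∈ (f.coeff : FreeMonoid X →₀ R).support, Q.sigmaM m

/-- `f` is compatible with `Q` if `σ(f) ≠ ∅`. -/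
def Compatible (f : FreeAlg R X) : Prop :=
  (Q.sigmaP f).Nonempty

/-- `f` is uniformly compatible with `Q` if it is compatible and all monomials in its
support have the same set of signatures. -/
def UniformlyCompatible (f : FreeAlg R X) : Prop :=
  Q.Compatible f ∧
    ∀ m ∈ (f.coeff : FreeMonoid X →₀ R).support, ∀ m' ∈ (f.coeff : FreeMonoid X →₀ R).support,
      Q.sigmaM m = Q.sigmaM m'

/-- The set of sources `s(f)` of a polynomial: the projection of `σ(f)` to the first
component. -/
def srcSet (f : FreeAlg R X) : Set V := Prod.fst '' Q.sigmaP f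

/-- The set of targets `t(f)` of a polynomial: the projection of `σ(f)` to the second
component. -/
def tgtSet (f : FreeAlg R X) : Set V := Prod.snd '' Q.sigmaP f

end LabelledQuiver

/-- A representation `(𝒱, φ)` of a labelled quiver `Q` by `K`-vector spaces: a vector space
`𝒱_v` for each vertex `v` and a `K`-linear map `φ(e) : 𝒱_{s(e)} → 𝒱_{t(e)}` for each edge. -/
structure QuiverRep (K : Type*) [Field K] {V E X : Type*} (Q : LabelledQuiver V E X) where
  space : V → Type*
  [addCommGroup : ∀ v, AddCommGroup (space v)]
  [module : ∀ v, Module K (space v)]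
  map : (e : E) → space (Q.src e) →ₗ[K] space (Q.tgt e)

attribute [instance] QuiverRep.addCommGroup QuiverRep.module

namespace QuiverRep

variable {K : Type*} [Field K] {V E X : Type*} {Q : LabelledQuiver V E X}

/-- The linear map `φ(eₙ)⋯φ(e₁)` induced by a path; the empty path induces the identity. -/
def pathMap (ρ : QuiverRep K Q) : {u w : V} → LQPath Q u w → (ρ.space u →ₗ[K] ρ.space w)
  | _, _, .nil _ => LinearMap.id
  | _, _, .cons e p => (ρ.map e).comp (ρ.pathMap p)

/-- A representation is consistent with the labelling if any two paths with the same source,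
the same target and the same label induce the same linear map. -/
def Consistent (ρ : QuiverRep K Q) : Prop :=
  ∀ (u w : V) (p q : LQPath Q u w), p.label = q.label → ρ.pathMap p = ρ.pathMap q

/-- The realization `φ_{v,w}(f)` of a polynomial `f` w.r.t. a representation: the `K`-linear
extension of the assignment sending the label of a path from `v` to `w` to the composition of
the linear maps along the path (an arbitrary such path is chosen for each monomial; for a
consistent representation the result does not depend on this choice). -/
noncomputable def realize (ρ : QuiverRep K Q) (v w : V) (f : FreeAlg K X) :
    ρ.space v →ₗ[K] ρ.space w :=
  Finsupp.sum (f.coeff : FreeMonoid X →₀ K) fun m c =>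
    letI := Classical.propDecidable (∃ p : LQPath Q v w, p.label = m)
    c • (if h : ∃ p : LQPath Q v w, p.label = m then ρ.pathMap h.choose else 0)

end QuiverRep

section Aux

variable {K : Type*} [Field K] {V E X : Type*} {Q : LabelledQuiver V E X}
  (ρ : QuiverRep K Q) [DecidableEq V]

/-- The linear map on `⊕ v, 𝒱_v` induced by an edge. -/
noncomputable def edgeMapD (e : E) :
    (DirectSum V ρ.space) →ₗ[K] (DirectSum V ρ.space) :=
  (DirectSum.lof K V ρ.space (Q.tgt e)) ∘ₗ (ρ.map e) ∘ₗ
    (DirectSum.component K V ρ.space (Q.src e))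

/-- The linear map on `⊕ v, 𝒱_v` induced by a generator `x ∈ X`. -/
noncomputable def genMapD (x : X) :
    (DirectSum V ρ.space) →ₗ[K] (DirectSum V ρ.space) :=
  letI := Classical.propDecidable (∃ e, Q.lab e = x)
  if h : ∃ e, Q.lab e = x then edgeMapD ρ h.choose else 0

@[simp] lemma LQPath.label_nil (v : V) : (LQPath.nil (Q := Q) v).label = 1 := by simp [LQPath.label]

@[simp] lemma LQPath.label_cons {u : V} (e : E) (p : LQPath Q u (Q.src e)) :
    (LQPath.cons e p).label = FreeMonoid.of (Q.lab e) * p.label := by simp [LQPath.label]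

@[simp] lemma QuiverRep.pathMap_cons {u : V} (e : E) (p : LQPath Q u (Q.src e)) :
    ρ.pathMap (LQPath.cons e p) = (ρ.map e).comp (ρ.pathMap p) := by simp [QuiverRep.pathMap]

lemma genMapD_lab (hlab : Function.Injective Q.lab) (e : E) :
    genMapD ρ (Q.lab e) = edgeMapD ρ e := by
  have h : ∃ e', Q.lab e' = Q.lab e := ⟨e, rfl⟩
  unfold genMapD
  rw [dif_pos h, hlab h.choose_spec]

lemma edgeMapD_lof_self (e : E) (a : ρ.space (Q.src e)) :
    edgeMapD ρ e (DirectSum.lof K V ρ.space (Q.src e) a) =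
      DirectSum.lof K V ρ.space (Q.tgt e) (ρ.map e a) := by
  simp [edgeMapD, DirectSum.component.lof_self]

lemma edgeMapD_lof_ne (e : E) {u : V} (h : u ≠ Q.src e) (a : ρ.space u) :
    edgeMapD ρ e (DirectSum.lof K V ρ.space u a) = 0 := by
  simp [edgeMapD, DirectSum.component.of, h]

lemma lift_label_lof (hlab : Function.Injective Q.lab) {u w : V} (p : LQPath Q u w)
    (a : ρ.space u) :
    (FreeMonoid.lift (genMapD ρ)) p.label (DirectSum.lof K V ρ.space u a) =
      DirectSum.lof K V ρ.space w (ρ.pathMap p a) := by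
  induction p with
  | nil => simp [QuiverRep.pathMap]
  | cons e p ih =>
    rw [LQPath.label_cons, map_mul, Module.End.mul_apply, ih, FreeMonoid.lift_eval_of,
      genMapD_lab ρ hlab, edgeMapD_lof_self, QuiverRep.pathMap_cons]
    rfl

lemma pathMap_eq_of_label_eq (hlab : Function.Injective Q.lab) {u w : V}
    (p q : LQPath Q u w) (h : p.label = q.label) (a : ρ.space u) :
    ρ.pathMap p a = ρ.pathMap q a := by
  have h1 := lift_label_lof ρ hlab p a
  have h2 := lift_label_lof ρ hlab q a
  rw [h] at h1
  have h3 := congrArg (DirectSum.component K V ρ.space w) (h1.symm.trans h2)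
  simpa [DirectSum.component.lof_self] using h3

lemma src_eq_tgt_of_label_one {u w : V} (p : LQPath Q u w) (h : p.label = 1) : u = w := by
  cases p with
  | nil => rfl
  | cons e p =>
    exfalso
    have := congrArg FreeMonoid.toList h
    simp at this

lemma src_tgt_eq_of_label_eq (hlab : Function.Injective Q.lab) :
    ∀ {u w : V} (p : LQPath Q u w) {u' w' : V} (q : LQPath Q u' w'),
      p.label = q.label → p.label ≠ 1 → u = u' ∧ w = w' := by
  intro u w p
  induction p with
  | nil => intro u' w' q h h1; exact absurd (LQPath.label_nil _) h1
  | cons e p ih =>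
    intro u' w' q h h1
    cases q with
    | nil =>
      rw [LQPath.label_nil] at h
      exact absurd h h1
    | cons e' q =>
      have hl := congrArg FreeMonoid.toList h
      simp only [LQPath.label_cons, FreeMonoid.toList_mul, FreeMonoid.toList_of,
        List.singleton_append, List.cons.injEq] at hl
      obtain ⟨h1', h2'⟩ := hl
      have he : e = e' := hlab h1'
      subst he
      have hpq : p.label = q.label := FreeMonoid.toList.injective h2'
      refine ⟨?_, rfl⟩
      by_cases hone : p.label = 1
      · exact (src_eq_tgt_of_label_one p hone).trans
          (src_eq_tgt_of_label_one q (hpq ▸ hone)).symm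
      · exact (ih q hpq hone).1

lemma lift_lof_eq_zero (hlab : Function.Injective Q.lab) (m : FreeMonoid X) {u : V}
    (hnp : ∀ (w : V) (p : LQPath Q u w), p.label ≠ m) (a : ρ.space u) :
    (FreeMonoid.lift (genMapD ρ)) m (DirectSum.lof K V ρ.space u a) = 0 := by
  revert hnp
  induction m using FreeMonoid.recOn with
  | one => intro hnp; exact absurd (LQPath.label_nil u) (hnp u (.nil u))
  | of_mul x m ihm =>
    intro hnp
    rw [map_mul, Module.End.mul_apply]
    by_cases hp : ∃ w, ∃ p : LQPath Q u w, p.label = m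
    · obtain ⟨w₀, p, hpl⟩ := hp
      have hrw : ((FreeMonoid.lift (genMapD ρ)) m) ((DirectSum.lof K V ρ.space u) a)
          = DirectSum.lof K V ρ.space w₀ (ρ.pathMap p a) := by
        conv_lhs => rw [← hpl]
        exact lift_label_lof ρ hlab p a
      rw [hrw, FreeMonoid.lift_eval_of]
      unfold genMapD
      split_ifs with he
      · by_cases hw : Q.src he.choose = w₀
        · exfalso
          subst hw
          exact hnp _ (.cons he.choose p)
            (by rw [LQPath.label_cons, hpl, he.choose_spec])
        · exact edgeMapD_lof_ne ρ he.choose (fun h => hw h.symm) _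
      · rfl
    · push_neg at hp
      rw [ihm (fun w p h => hp w p h), map_zero]

/-- The algebra homomorphism `K⟨X⟩ → End(⊕_v 𝒱_v)` induced by the representation. -/
noncomputable def phiA : FreeAlg K X →ₐ[K] Module.End K (DirectSum V ρ.space) :=
  MonoidAlgebra.lift K _ (FreeMonoid X) (FreeMonoid.lift (genMapD ρ))

lemma phiA_apply (g : FreeAlg K X) :
    phiA ρ g = Finsupp.sum g.coeff fun m c => c • (FreeMonoid.lift (genMapD ρ)) m :=
  MonoidAlgebra.lift_apply _ _

lemma phiA_lof (hlab : Function.Injective Q.lab) (g : FreeAlg K X) (v w : V)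
    (hσ : (v, w) ∈ Q.sigmaP g) (a : ρ.space v) :
    phiA ρ g (DirectSum.lof K V ρ.space v a) =
      DirectSum.lof K V ρ.space w (ρ.realize v w g a) := by
  have hpath : ∀ m ∈ (g.coeff : FreeMonoid X →₀ K).support, ∃ p : LQPath Q v w, p.label = m :=
    fun m hm => Set.mem_iInter₂.mp hσ m hm
  rw [phiA_apply]
  unfold QuiverRep.realize
  rw [Finsupp.sum, Finsupp.sum, LinearMap.sum_apply, LinearMap.sum_apply, map_sum]
  refine Finset.sum_congr rfl fun m hm => ?_
  have h := hpath m hm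
  have hl : ((FreeMonoid.lift (genMapD ρ)) m) ((DirectSum.lof K V ρ.space v) a)
      = DirectSum.lof K V ρ.space w (ρ.pathMap h.choose a) := by
    conv_lhs => rw [← h.choose_spec]
    exact lift_label_lof ρ hlab h.choose a
  rw [LinearMap.smul_apply, LinearMap.smul_apply, dif_pos h, hl, map_smul]

lemma phiA_eq_zero (hlab : Function.Injective Q.lab) (g : FreeAlg K X)
    (hg1 : (1 : FreeMonoid X) ∉ (g.coeff : FreeMonoid X →₀ K).support)
    (v₀ w₀ : V) (hσ : (v₀, w₀) ∈ Q.sigmaP g) (hz : ρ.realize v₀ w₀ g = 0) :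
    phiA ρ g = 0 := by
  refine DirectSum.linearMap_ext K fun u => ?_
  refine LinearMap.ext fun a => ?_
  simp only [LinearMap.comp_apply, LinearMap.zero_comp, LinearMap.zero_apply]
  by_cases hu : u = v₀
  · subst hu
    rw [phiA_lof ρ hlab g u w₀ hσ a, hz]
    simp
  · rw [phiA_apply, Finsupp.sum, LinearMap.sum_apply]
    refine Finset.sum_eq_zero fun m hm => ?_
    obtain ⟨pm, hpml⟩ : ∃ p : LQPath Q v₀ w₀, p.label = m := Set.mem_iInter₂.mp hσ m hm
    have hm1 : m ≠ 1 := fun h => hg1 (h ▸ hm)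
    have hnp : ∀ (w : V) (p : LQPath Q u w), p.label ≠ m := by
      intro w p hl
      exact hu (src_tgt_eq_of_label_eq hlab p pm (by rw [hl, hpml])
        (by rw [hl]; exact hm1)).1
    rw [LinearMap.smul_apply, lift_lof_eq_zero ρ hlab m hnp a, smul_zero]

end Aux

/-- Let `F ⊆ K⟨X⟩` consist of polynomials without constant term and let `f`
lie in the two-sided ideal generated by `F`. Let `Q` be a labelled quiver whose edges have
pairwise distinct labels and assume `f` and all elements of `F` are compatible with `Q`. Then
for every representation of `Q` such that the realizations of the elements of `F` are zero,
the realization of `f` is zero. -/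
theorem main_theorem_unique_labels {K X : Type*} [Field K] (F : Set (FreeAlg K X))
    (hconst : ∀ g ∈ F, (1 : FreeMonoid X) ∉ ((g : FreeAlg K X).coeff : FreeMonoid X →₀ K).support)
    (f : FreeAlg K X) (hf : MemIdeal F f) {V E : Type*} (Q : LabelledQuiver V E X)
    (hlab : Function.Injective Q.lab)
    (hcf : Q.Compatible f) (hF : ∀ g ∈ F, Q.Compatible g)
    (ρ : QuiverRep K Q)
    (hzero : ∀ g ∈ F, ∀ v w : V, (v, w) ∈ Q.sigmaP g → ρ.realize v w g = 0) :
    ∀ v w : V, (v, w) ∈ Q.sigmaP f → ρ.realize v w f = 0 := by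
  classical
  obtain ⟨n, A, B, G, hG, hsum⟩ := hf
  have hphiF : ∀ i, phiA ρ (G i) = 0 := by
    intro i
    obtain ⟨⟨v₀, w₀⟩, hσ⟩ := hF (G i) (hG i)
    exact phiA_eq_zero ρ hlab (G i) (hconst (G i) (hG i)) v₀ w₀ hσ
      (hzero (G i) (hG i) v₀ w₀ hσ)
  have hphif : phiA ρ f = 0 := by
    rw [hsum, map_sum]
    refine Finset.sum_eq_zero fun i _ => ?_
    rw [map_mul, map_mul, hphiF i, mul_zero, zero_mul]
  intro v w hσf
  refine LinearMap.ext fun a => ?_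
  have hkey := phiA_lof ρ hlab f v w hσf a
  rw [hphif] at hkey
  have h0 : DirectSum.lof K V ρ.space w (ρ.realize v w f a) = 0 := by
    rw [← hkey]; rfl
  have h1 := congrArg (DirectSum.component K V ρ.space w) h0
  simpa [DirectSum.component.lof_self] using h1
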